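/- Let G be a finite connected simple graph on n ≥ 5 vertices whose complement Ḡ is also connected. Then n(n−1)(n−4)/8 ≤ C(G) + C(Ḡ) < n(n−1)(n−4)/4, where the lower bound is attained with equality if and only if G and Ḡ have the same number of edges and both G and Ḡ are electrically-edge-equivalent. -/

import Mathlib

set_option maxHeartbeats 1600000


open Matrix Finset

/-- The Moore–Penrose pseudoinverse of a real square matrix, specified (when it exists)
by the four Penrose conditions. -/
noncomputable def pinv {n : Type*} [Fintype n] [DecidableEq n] (A : Matrix n n ℝ) :
    Matrix n n ℝ :=
  open scoped Classical in
  if h : ∃ B, A * B * A = A ∧ B * A * B = B ∧ (A * B)ᵀ = A * B ∧ (B * A)ᵀ = B * A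
  then h.choose else 0

/-- The resistance distance between two vertices of a graph:
`Ω_G(i,j) = (e_i − e_j)ᵀ L⁺ (e_i − e_j)` where `L⁺` is the Moore–Penrose pseudoinverse
of the Laplacian matrix of `G`. -/
noncomputable def resDist {V : Type*} [Fintype V] [DecidableEq V] (G : SimpleGraph V)
    (i j : V) : ℝ :=
  letI : DecidableRel G.Adj := Classical.decRel _
  (Pi.single i 1 - Pi.single j 1) ⬝ᵥ
    (pinv (G.lapMatrix ℝ)) *ᵥ (Pi.single i 1 - Pi.single j 1)

lemma resDist_comm {V : Type*} [Fintype V] [DecidableEq V] (G : SimpleGraph V) (i j : V) :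
    resDist G i j = resDist G j i := by
  unfold resDist
  rw [show (Pi.single j 1 - Pi.single i 1 : V → ℝ)
        = -(Pi.single i 1 - Pi.single j 1) by rw [neg_sub]]
  rw [Matrix.mulVec_neg, dotProduct_neg, neg_dotProduct, neg_neg]

/-- The global cyclicity index `C(G) = Σ_{ij ∈ E(G)} (1/Ω_G(i,j) − 1)`,
the sum over all edges of `G`. -/
noncomputable def cyclicity {V : Type*} [Fintype V] [DecidableEq V] (G : SimpleGraph V) : ℝ :=
  letI : DecidableRel G.Adj := Classical.decRel _
  ∑ e ∈ G.edgeFinset,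
    Sym2.lift ⟨fun i j => 1 / resDist G i j - 1,
      fun i j => by simp only []; rw [resDist_comm G i j]⟩ e

/-- A connected graph is electrically-edge-equivalent if all resistance distances
between pairs of adjacent vertices are equal. -/
def ElecEdgeEquiv {V : Type*} [Fintype V] [DecidableEq V] (G : SimpleGraph V) : Prop :=
  ∀ u v x y : V, G.Adj u v → G.Adj x y → resDist G u v = resDist G x y

/- ------------------------------------------------------------------ -/
/- Auxiliary development                                               -/
/- ------------------------------------------------------------------ -/

section NGaux
variable {V : Type*} [Fintype V] [DecidableEq V]

set_option linter.unusedSectionVars false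

lemma penrose_uniq (A B₁ B₂ : Matrix V V ℝ)
    (h₁ : A * B₁ * A = A ∧ B₁ * A * B₁ = B₁ ∧ (A * B₁)ᵀ = A * B₁ ∧ (B₁ * A)ᵀ = B₁ * A)
    (h₂ : A * B₂ * A = A ∧ B₂ * A * B₂ = B₂ ∧ (A * B₂)ᵀ = A * B₂ ∧ (B₂ * A)ᵀ = B₂ * A) :
    B₁ = B₂ := by
  obtain ⟨a1, b1, c1, d1⟩ := h₁
  obtain ⟨a2, b2, c2, d2⟩ := h₂
  have hAt : Aᵀ = Aᵀ * (A * B₂) := by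
    conv_lhs => rw [← a2]
    rw [transpose_mul, c2]
  have hA : Aᵀ = (B₂ * A) * Aᵀ := by
    conv_lhs => rw [← a2]
    rw [Matrix.mul_assoc, transpose_mul, d2]
  have hAB : A * B₁ = A * B₂ := by
    calc A * B₁ = (A * B₁)ᵀ := c1.symm
    _ = B₁ᵀ * Aᵀ := transpose_mul _ _
    _ = B₁ᵀ * (Aᵀ * (A * B₂)) := by rw [← hAt]
    _ = (B₁ᵀ * Aᵀ) * (A * B₂) := (Matrix.mul_assoc _ _ _).symm
    _ = (A * B₁)ᵀ * (A * B₂) := by rw [transpose_mul]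
    _ = (A * B₁) * (A * B₂) := by rw [c1]
    _ = (A * B₁ * A) * B₂ := by simp only [Matrix.mul_assoc]
    _ = A * B₂ := by rw [a1]
  have hBA : B₁ * A = B₂ * A := by
    calc B₁ * A = (B₁ * A)ᵀ := d1.symm
    _ = Aᵀ * B₁ᵀ := transpose_mul _ _
    _ = ((B₂ * A) * Aᵀ) * B₁ᵀ := by rw [← hA]
    _ = (B₂ * A) * (Aᵀ * B₁ᵀ) := Matrix.mul_assoc _ _ _
    _ = (B₂ * A) * (B₁ * A)ᵀ := by rw [← transpose_mul]
    _ = (B₂ * A) * (B₁ * A) := by rw [d1]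
    _ = B₂ * (A * B₁ * A) := by simp only [Matrix.mul_assoc]
    _ = B₂ * A := by rw [a1]
  calc B₁ = B₁ * A * B₁ := b1.symm
  _ = B₂ * A * B₁ := by rw [hBA]
  _ = B₂ * (A * B₁) := Matrix.mul_assoc _ _ _
  _ = B₂ * (A * B₂) := by rw [hAB]
  _ = B₂ := by rw [← Matrix.mul_assoc, b2]

/-- The all-ones matrix. -/
def onesM (V : Type*) : Matrix V V ℝ := Matrix.of fun _ _ => (1 : ℝ)

@[simp] lemma onesM_apply (i j : V) : onesM V i j = 1 := rfl

variable (G : SimpleGraph V) [DecidableRel G.Adj]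

lemma lap_row_sum (i : V) : ∑ j, G.lapMatrix ℝ i j = 0 := by
  have := congrFun (G.lapMatrix_mulVec_const_eq_zero (R := ℝ)) i
  simpa [Matrix.mulVec, dotProduct] using this

lemma lap_col_sum (j : V) : ∑ i, G.lapMatrix ℝ i j = 0 := by
  have hs := G.isSymm_lapMatrix (R := ℝ)
  calc ∑ i, G.lapMatrix ℝ i j = ∑ i, G.lapMatrix ℝ j i := by
        refine Finset.sum_congr rfl fun i _ => ?_
        rw [← hs.apply i j]
  _ = 0 := lap_row_sum G j

lemma lap_mul_ones : G.lapMatrix ℝ * onesM V = 0 := by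
  ext i j
  simp [Matrix.mul_apply, lap_row_sum G i]

lemma ones_mul_lap : onesM V * G.lapMatrix ℝ = 0 := by
  ext i j
  simp [Matrix.mul_apply, lap_col_sum G j]

lemma ones_mul_ones : onesM V * onesM V = (Fintype.card V : ℝ) • onesM V := by
  ext i j
  simp [Matrix.mul_apply, Finset.card_univ]

/-- The invertible shift of the Laplacian. -/
noncomputable def Hmat : Matrix V V ℝ :=
  G.lapMatrix ℝ + ((Fintype.card V : ℝ))⁻¹ • onesM V

lemma Hmat_isSymm : (Hmat G)ᵀ = Hmat G := by
  have hs := G.isSymm_lapMatrix (R := ℝ)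
  unfold Hmat
  rw [transpose_add, transpose_smul, hs]
  rfl

lemma dot_ones (x : V → ℝ) : x ⬝ᵥ (onesM V *ᵥ x) = (∑ k, x k) ^ 2 := by
  simp only [dotProduct, Matrix.mulVec, onesM_apply]
  simp only [dotProduct, Matrix.of_apply, one_mul]
  rw [sq, ← Finset.sum_mul]

lemma Hmat_posDef (hG : G.Connected) : (Hmat G).PosDef := by
  have hcard : 0 < Fintype.card V := @Fintype.card_pos V _ hG.nonempty
  have hcR : (0 : ℝ) < (Fintype.card V : ℝ) := by exact_mod_cast hcard
  refine .of_dotProduct_mulVec_pos ?_ ?_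
  · rw [Matrix.IsHermitian, conjTranspose_eq_transpose_of_trivial, Hmat_isSymm]
  · intro x hx
    rw [star_trivial]
    have hsplit : x ⬝ᵥ Hmat G *ᵥ x
        = x ⬝ᵥ G.lapMatrix ℝ *ᵥ x + ((Fintype.card V : ℝ))⁻¹ * (∑ k, x k) ^ 2 := by
      unfold Hmat
      rw [Matrix.add_mulVec, dotProduct_add, Matrix.smul_mulVec,
        dotProduct_smul, smul_eq_mul, dot_ones]
    have hL : 0 ≤ x ⬝ᵥ G.lapMatrix ℝ *ᵥ x := by
      have := (G.posSemidef_lapMatrix ℝ).dotProduct_mulVec_nonneg x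
      simpa using this
    rcases lt_or_eq_of_le hL with h | h
    · rw [hsplit]
      have : 0 ≤ ((Fintype.card V : ℝ))⁻¹ * (∑ k, x k) ^ 2 :=
        mul_nonneg (by positivity) (sq_nonneg _)
      linarith
    · have hLx : G.lapMatrix ℝ *ᵥ x = 0 := by
        have := ((G.posSemidef_lapMatrix ℝ).dotProduct_mulVec_zero_iff x).mp
          (by rw [star_trivial]; exact h.symm)
        exact this
      have hconst : ∀ i j : V, x i = x j := by
        have := (G.lapMatrix_mulVec_eq_zero_iff_forall_reachable (x := x)).mp
          hLx
        exact fun i j => this i j (hG.preconnected i j)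
      obtain ⟨i0⟩ := hG.nonempty
      have hx0 : x i0 ≠ 0 := by
        intro h0
        apply hx
        ext k
        rw [hconst k i0, h0]; rfl
      have hsum : ∑ k, x k = (Fintype.card V : ℝ) * x i0 := by
        rw [Finset.sum_congr rfl fun k _ => hconst k i0]
        simp [Finset.card_univ, mul_comm]
      rw [hsplit, ← h, zero_add, hsum]
      positivity

/-- Candidate pseudoinverse of the Laplacian. -/
noncomputable def Bmat : Matrix V V ℝ :=
  (Hmat G)⁻¹ - ((Fintype.card V : ℝ))⁻¹ • onesM V

lemma Hmat_det_unit (hG : G.Connected) : IsUnit (Hmat G).det :=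
  (Matrix.isUnit_iff_isUnit_det _).mp (Hmat_posDef G hG).isUnit

lemma Hmat_mul_inv (hG : G.Connected) : Hmat G * (Hmat G)⁻¹ = 1 :=
  Matrix.mul_nonsing_inv _ (Hmat_det_unit G hG)
lemma Hmat_inv_mul (hG : G.Connected) : (Hmat G)⁻¹ * Hmat G = 1 :=
  Matrix.nonsing_inv_mul _ (Hmat_det_unit G hG)

lemma cardV_pos (hG : G.Connected) : 0 < (Fintype.card V : ℝ) := by
  have : 0 < Fintype.card V := @Fintype.card_pos V _ hG.nonempty
  exact_mod_cast this

lemma Hmat_mul_ones (hG : G.Connected) : Hmat G * onesM V = onesM V := by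
  unfold Hmat
  rw [Matrix.add_mul, lap_mul_ones, Matrix.smul_mul, ones_mul_ones, smul_smul,
    inv_mul_cancel₀ (ne_of_gt (cardV_pos G hG)), one_smul, zero_add]

lemma ones_mul_Hmat (hG : G.Connected) : onesM V * Hmat G = onesM V := by
  unfold Hmat
  rw [Matrix.mul_add, ones_mul_lap, Matrix.mul_smul, ones_mul_ones, smul_smul,
    inv_mul_cancel₀ (ne_of_gt (cardV_pos G hG)), one_smul, zero_add]

lemma Hinv_mul_ones (hG : G.Connected) : (Hmat G)⁻¹ * onesM V = onesM V := by
  conv_lhs => rw [← Hmat_mul_ones G hG, ← Matrix.mul_assoc, Hmat_inv_mul G hG, Matrix.one_mul]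

lemma ones_mul_Hinv (hG : G.Connected) : onesM V * (Hmat G)⁻¹ = onesM V := by
  conv_lhs => rw [← ones_mul_Hmat G hG, Matrix.mul_assoc, Hmat_mul_inv G hG, Matrix.mul_one]

lemma ones_mul_Bmat (hG : G.Connected) : onesM V * Bmat G = 0 := by
  unfold Bmat
  rw [Matrix.mul_sub, ones_mul_Hinv G hG, Matrix.mul_smul, ones_mul_ones, smul_smul,
    inv_mul_cancel₀ (ne_of_gt (cardV_pos G hG)), one_smul, sub_self]

lemma lap_mul_Bmat (hG : G.Connected) :
    G.lapMatrix ℝ * Bmat G = 1 - ((Fintype.card V : ℝ))⁻¹ • onesM V := by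
  have hL : G.lapMatrix ℝ = Hmat G - ((Fintype.card V : ℝ))⁻¹ • onesM V := by
    rw [Hmat, add_sub_cancel_right]
  unfold Bmat
  rw [Matrix.mul_sub, Matrix.mul_smul, lap_mul_ones, smul_zero, sub_zero]
  conv_lhs => rw [hL]
  rw [Matrix.sub_mul, Hmat_mul_inv G hG, Matrix.smul_mul, ones_mul_Hinv G hG]

lemma Bmat_mul_lap (hG : G.Connected) :
    Bmat G * G.lapMatrix ℝ = 1 - ((Fintype.card V : ℝ))⁻¹ • onesM V := by
  have hL : G.lapMatrix ℝ = Hmat G - ((Fintype.card V : ℝ))⁻¹ • onesM V := by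
    rw [Hmat, add_sub_cancel_right]
  unfold Bmat
  rw [Matrix.sub_mul, Matrix.smul_mul, ones_mul_lap, smul_zero, sub_zero]
  conv_lhs => rw [hL]
  rw [Matrix.mul_sub, Hmat_inv_mul G hG, Matrix.mul_smul, Hinv_mul_ones G hG]

lemma onesM_transpose : (onesM V)ᵀ = onesM V := rfl

lemma penrose_Bmat (hG : G.Connected) :
    G.lapMatrix ℝ * Bmat G * G.lapMatrix ℝ = G.lapMatrix ℝ ∧
    Bmat G * G.lapMatrix ℝ * Bmat G = Bmat G ∧
    (G.lapMatrix ℝ * Bmat G)ᵀ = G.lapMatrix ℝ * Bmat G ∧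
    (Bmat G * G.lapMatrix ℝ)ᵀ = Bmat G * G.lapMatrix ℝ := by
  have h1 := lap_mul_Bmat G hG
  have h2 := Bmat_mul_lap G hG
  refine ⟨?_, ?_, ?_, ?_⟩
  · rw [h1, Matrix.sub_mul, Matrix.one_mul, Matrix.smul_mul, ones_mul_lap, smul_zero, sub_zero]
  · rw [h2, Matrix.sub_mul, Matrix.one_mul, Matrix.smul_mul, ones_mul_Bmat G hG,
      smul_zero, sub_zero]
  · rw [h1, transpose_sub, transpose_smul, onesM_transpose, transpose_one]
  · rw [h2, transpose_sub, transpose_smul, onesM_transpose, transpose_one]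

lemma pinv_lap_eq (hG : G.Connected) : pinv (G.lapMatrix ℝ) = Bmat G := by
  have hp := penrose_Bmat G hG
  have hex : ∃ B, G.lapMatrix ℝ * B * G.lapMatrix ℝ = G.lapMatrix ℝ ∧
      B * G.lapMatrix ℝ * B = B ∧ (G.lapMatrix ℝ * B)ᵀ = G.lapMatrix ℝ * B ∧
      (B * G.lapMatrix ℝ)ᵀ = B * G.lapMatrix ℝ := ⟨Bmat G, hp⟩
  rw [pinv, dif_pos hex]
  exact penrose_uniq _ _ _ hex.choose_spec hp

/-- instance-independent resistance distance -/
noncomputable def resDistS (i j : V) : ℝ :=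
  (Pi.single i 1 - Pi.single j 1) ⬝ᵥ (Bmat G) *ᵥ (Pi.single i 1 - Pi.single j 1)

lemma lapMatrix_indep (i1 i2 : DecidableRel G.Adj) :
    @SimpleGraph.lapMatrix V ℝ _ G i1 _ _ = @SimpleGraph.lapMatrix V ℝ _ G i2 _ _ := by
  congr!

lemma Bmat_indep (i1 i2 : DecidableRel G.Adj) :
    @Bmat V _ _ G i1 = @Bmat V _ _ G i2 := by
  congr!

lemma resDist_eq_resDistS (hG : G.Connected) (i j : V) :
    resDist G i j = resDistS G i j := by
  unfold resDist resDistS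
  rw [lapMatrix_indep G (Classical.decRel _) ‹DecidableRel G.Adj›, pinv_lap_eq G hG]

lemma quad_cs (L : Matrix V V ℝ) (hpsd : L.PosSemidef) (f x : V → ℝ)
    (hs : x ⬝ᵥ L *ᵥ f = f ⬝ᵥ L *ᵥ x) (ha : 0 < x ⬝ᵥ L *ᵥ x) :
    (f ⬝ᵥ L *ᵥ x) ^ 2 ≤ (f ⬝ᵥ L *ᵥ f) * (x ⬝ᵥ L *ᵥ x) := by
  have key : ((x ⬝ᵥ L *ᵥ x) • f - (f ⬝ᵥ L *ᵥ x) • x) ⬝ᵥ L *ᵥ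
      ((x ⬝ᵥ L *ᵥ x) • f - (f ⬝ᵥ L *ᵥ x) • x)
      = (x ⬝ᵥ L *ᵥ x)^2 * (f ⬝ᵥ L *ᵥ f) - (x ⬝ᵥ L *ᵥ x) * (f ⬝ᵥ L *ᵥ x)^2 := by
    simp only [sub_dotProduct, dotProduct_sub, Matrix.mulVec_sub,
      smul_dotProduct, dotProduct_smul, Matrix.mulVec_smul, smul_eq_mul, hs]
    ring
  have h0 : 0 ≤ ((x ⬝ᵥ L *ᵥ x) • f - (f ⬝ᵥ L *ᵥ x) • x) ⬝ᵥ L *ᵥ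
      ((x ⬝ᵥ L *ᵥ x) • f - (f ⬝ᵥ L *ᵥ x) • x) := by
    have := hpsd.dotProduct_mulVec_nonneg ((x ⬝ᵥ L *ᵥ x) • f - (f ⬝ᵥ L *ᵥ x) • x)
    simpa using this
  rw [key] at h0
  nlinarith [h0, ha]

lemma ones_mulVec_e (i j : V) : onesM V *ᵥ (Pi.single i 1 - Pi.single j 1 : V → ℝ) = 0 := by
  ext k
  simp [onesM, Matrix.mulVec, dotProduct_sub, dotProduct_single]

lemma lap_mulVec_x (hG : G.Connected) (i j : V) :
    G.lapMatrix ℝ *ᵥ (Bmat G *ᵥ (Pi.single i 1 - Pi.single j 1 : V → ℝ))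
      = (Pi.single i 1 - Pi.single j 1 : V → ℝ) := by
  rw [Matrix.mulVec_mulVec, lap_mul_Bmat G hG, Matrix.sub_mulVec, Matrix.one_mulVec,
    Matrix.smul_mulVec, ones_mulVec_e, smul_zero, sub_zero]

lemma resDistS_eq_energy (hG : G.Connected) (i j : V) :
    resDistS G i j = (Bmat G *ᵥ (Pi.single i 1 - Pi.single j 1 : V → ℝ)) ⬝ᵥ
      G.lapMatrix ℝ *ᵥ (Bmat G *ᵥ (Pi.single i 1 - Pi.single j 1 : V → ℝ)) := by
  rw [lap_mulVec_x G hG, resDistS, dotProduct_comm]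

lemma resDistS_pos (hG : G.Connected) (i j : V) (hij : i ≠ j) : 0 < resDistS G i j := by
  have h0 : 0 ≤ (Bmat G *ᵥ (Pi.single i 1 - Pi.single j 1 : V → ℝ)) ⬝ᵥ
      G.lapMatrix ℝ *ᵥ (Bmat G *ᵥ (Pi.single i 1 - Pi.single j 1 : V → ℝ)) := by
    have := (G.posSemidef_lapMatrix ℝ).dotProduct_mulVec_nonneg (Bmat G *ᵥ (Pi.single i 1 - Pi.single j 1 : V → ℝ))
    simpa using this
  rcases lt_or_eq_of_le h0 with h | h
  · rw [resDistS_eq_energy G hG]; exact h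
  · exfalso
    have hLx : G.lapMatrix ℝ *ᵥ (Bmat G *ᵥ (Pi.single i 1 - Pi.single j 1 : V → ℝ)) = 0 :=
      ((G.posSemidef_lapMatrix ℝ).dotProduct_mulVec_zero_iff _).mp
        (by rw [star_trivial]; exact h.symm)
    have hz : (Pi.single i 1 - Pi.single j 1 : V → ℝ) = 0 := by
      rw [← lap_mulVec_x G hG i j]; exact hLx
    have hei := congrFun hz i
    simp [Pi.single_apply, hij.symm] at hei

lemma resDistS_eq_potential (hG : G.Connected) (i j : V) :
    resDistS G i j = (Bmat G *ᵥ (Pi.single i 1 - Pi.single j 1 : V → ℝ)) i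
      - (Bmat G *ᵥ (Pi.single i 1 - Pi.single j 1 : V → ℝ)) j := by
  rw [resDistS, sub_dotProduct, single_dotProduct]
  simp [single_dotProduct]

lemma lap_dot_symm (f g : V → ℝ) :
    f ⬝ᵥ G.lapMatrix ℝ *ᵥ g = g ⬝ᵥ G.lapMatrix ℝ *ᵥ f := by
  rw [Matrix.dotProduct_mulVec, dotProduct_comm, ← Matrix.mulVec_transpose,
    (G.isSymm_lapMatrix (R := ℝ)).eq]

lemma cs_energy (hG : G.Connected) (i j : V) (hij : i ≠ j) (f : V → ℝ) :
    (f i - f j) ^ 2 ≤ (f ⬝ᵥ G.lapMatrix ℝ *ᵥ f) * resDistS G i j := by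
  have hfe : f ⬝ᵥ G.lapMatrix ℝ *ᵥ (Bmat G *ᵥ (Pi.single i 1 - Pi.single j 1 : V → ℝ))
      = f i - f j := by
    rw [lap_mulVec_x G hG i j, dotProduct_sub, dotProduct_single,
      dotProduct_single]
    ring
  have := quad_cs (L := G.lapMatrix ℝ) (G.posSemidef_lapMatrix ℝ) f
    (Bmat G *ᵥ (Pi.single i 1 - Pi.single j 1 : V → ℝ))
    (lap_dot_symm G _ f)
    (by rw [← resDistS_eq_energy G hG]; exact resDistS_pos G hG i j hij)
  rw [hfe, ← resDistS_eq_energy G hG] at this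
  exact this

lemma lap_apply_eq (i : V) : G.lapMatrix ℝ i i = G.degree i := by
  simp [SimpleGraph.lapMatrix, SimpleGraph.degMatrix, Matrix.diagonal_apply_eq]

lemma lap_apply_adj {i j : V} (hij : G.Adj i j) : G.lapMatrix ℝ i j = -1 := by
  simp [SimpleGraph.lapMatrix, SimpleGraph.degMatrix, Matrix.diagonal_apply_ne _ hij.ne, hij]

lemma compl_exists_adj (hGc : Gᶜ.Connected) (h2 : 2 ≤ Fintype.card V) (v : V) :
    ∃ w, Gᶜ.Adj v w := by
  obtain ⟨w, hw⟩ := Fintype.exists_ne_of_one_lt_card (by omega) v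
  obtain ⟨p⟩ := hGc.preconnected v w
  cases p with
  | nil => exact absurd rfl hw.symm
  | cons h _ => exact ⟨_, h⟩

lemma deg_le (hGc : Gᶜ.Connected) (h2 : 2 ≤ Fintype.card V) (v : V) :
    G.degree v + 2 ≤ Fintype.card V := by
  obtain ⟨w, hw⟩ := compl_exists_adj G hGc h2 v
  have hvw : v ≠ w := hw.ne
  have hnadj : ¬G.Adj v w := hw.2
  have hsub : G.neighborFinset v ⊆ (univ.erase w).erase v := by
    intro u hu
    rw [SimpleGraph.mem_neighborFinset] at hu
    refine Finset.mem_erase.mpr ⟨fun h => ?_, Finset.mem_erase.mpr ⟨fun h => ?_, mem_univ u⟩⟩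
    · exact G.irrefl (h ▸ hu)
    · exact hnadj (h ▸ hu)
  have hcard : ((univ.erase w).erase v).card = Fintype.card V - 2 := by
    rw [Finset.card_erase_of_mem (Finset.mem_erase.mpr ⟨hvw, mem_univ v⟩),
      Finset.card_erase_of_mem (mem_univ w), Finset.card_univ]
    omega
  have := Finset.card_le_card hsub
  rw [hcard] at this
  rw [← SimpleGraph.card_neighborFinset_eq_degree]
  omega

lemma deg_le_real (hGc : Gᶜ.Connected) (h2 : 2 ≤ Fintype.card V) (v : V) :
    (G.degree v : ℝ) ≤ (Fintype.card V : ℝ) - 2 := by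
  have h := deg_le G hGc h2 v
  have : (G.degree v : ℝ) + 2 ≤ (Fintype.card V : ℝ) := by exact_mod_cast h
  linarith

lemma energy_e {i j : V} (hadj : G.Adj i j) :
    (Pi.single i 1 - Pi.single j 1 : V → ℝ) ⬝ᵥ
      G.lapMatrix ℝ *ᵥ (Pi.single i 1 - Pi.single j 1 : V → ℝ)
      = (G.degree i : ℝ) + (G.degree j : ℝ) + 2 := by
  rw [Matrix.mulVec_sub, Matrix.mulVec_single_one, Matrix.mulVec_single_one,
    sub_dotProduct, single_dotProduct, single_dotProduct]
  simp only [Pi.sub_apply, mul_one, one_mul, Matrix.col_apply]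
  rw [lap_apply_eq, lap_apply_eq, lap_apply_adj G hadj, lap_apply_adj G hadj.symm]
  ring

lemma resDistS_ge (hG : G.Connected) (hGc : Gᶜ.Connected) (h5 : 5 ≤ Fintype.card V)
    {i j : V} (hadj : G.Adj i j) :
    2 / ((Fintype.card V : ℝ) - 1) ≤ resDistS G i j := by
  have hcs := cs_energy G hG i j hadj.ne (Pi.single i 1 - Pi.single j 1 : V → ℝ)
  have hei : (Pi.single i 1 - Pi.single j 1 : V → ℝ) i = 1 := by
    simp [Pi.single_apply, hadj.ne.symm]
  have hej : (Pi.single i 1 - Pi.single j 1 : V → ℝ) j = -1 := by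
    simp [Pi.single_apply, hadj.ne]
  rw [hei, hej, energy_e G hadj] at hcs
  have hEbd : (G.degree i : ℝ) + (G.degree j : ℝ) + 2 ≤ 2 * (Fintype.card V : ℝ) - 2 := by
    have h1 := deg_le_real G hGc (by omega) i
    have h2 := deg_le_real G hGc (by omega) j
    linarith
  have hpos := resDistS_pos G hG i j hadj.ne
  have hn : (5 : ℝ) ≤ (Fintype.card V : ℝ) := by exact_mod_cast h5
  have h4 : (4 : ℝ) ≤ (2 * (Fintype.card V : ℝ) - 2) * resDistS G i j := by
    nlinarith
  rw [div_le_iff₀ (by linarith)]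
  nlinarith

lemma resDistS_le_one (hG : G.Connected) {i j : V} (hadj : G.Adj i j) :
    resDistS G i j ≤ 1 := by
  have hpot := resDistS_eq_potential G hG i j
  have hen := resDistS_eq_energy G hG i j
  set x : V → ℝ := Bmat G *ᵥ (Pi.single i 1 - Pi.single j 1 : V → ℝ) with hxdef
  have hform : x ⬝ᵥ G.lapMatrix ℝ *ᵥ x
      = (∑ a : V, ∑ b : V, if G.Adj a b then (x a - x b)^2 else 0) / 2 := by
    rw [← Matrix.toLinearMap₂'_apply', SimpleGraph.lapMatrix_toLinearMap₂']
  have hnn : ∀ a b : V, 0 ≤ if G.Adj a b then (x a - x b)^2 else 0 := by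
    intro a b; split <;> positivity
  have h1 : (if G.Adj i j then (x i - x j)^2 else 0) ≤ ∑ b, if G.Adj i b then (x i - x b)^2 else 0 :=
    Finset.single_le_sum (fun b _ => hnn i b) (mem_univ j)
  have h2 : (if G.Adj j i then (x j - x i)^2 else 0) ≤ ∑ b, if G.Adj j b then (x j - x b)^2 else 0 :=
    Finset.single_le_sum (fun b _ => hnn j b) (mem_univ i)
  have h3 : (∑ b, if G.Adj i b then (x i - x b)^2 else 0)
      + (∑ b, if G.Adj j b then (x j - x b)^2 else 0)
      ≤ ∑ a : V, ∑ b : V, if G.Adj a b then (x a - x b)^2 else 0 := by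
    have hsub : ({i, j} : Finset V) ⊆ univ := subset_univ _
    have := Finset.sum_le_sum_of_subset_of_nonneg
      (f := fun a => ∑ b : V, if G.Adj a b then (x a - x b)^2 else 0) hsub
      (fun a _ _ => Finset.sum_nonneg fun b _ => hnn a b)
    rwa [Finset.sum_pair hadj.ne] at this
  rw [if_pos hadj] at h1
  rw [if_pos hadj.symm] at h2
  have hkey : (x i - x j)^2 ≤ x ⬝ᵥ G.lapMatrix ℝ *ᵥ x := by
    rw [hform]
    nlinarith [h1, h2, h3]
  rw [← hen, ← hpot] at hkey
  nlinarith [resDistS_pos G hG i j hadj.ne, hkey]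

/-- generic: twice the sum over edges equals the sum over ordered adjacent pairs -/
lemma sum_edges_twice (f : V → V → ℝ) (hf : ∀ a b, f a b = f b a) :
    2 * ∑ e ∈ G.edgeFinset, Sym2.lift ⟨f, hf⟩ e
      = ∑ a : V, ∑ b : V, if G.Adj a b then f a b else 0 := by
  have stepC : ∑ d : G.Dart, Sym2.lift ⟨f, hf⟩ d.edge
      = ∑ e ∈ G.edgeFinset, 2 * Sym2.lift ⟨f, hf⟩ e := by
    rw [← Finset.sum_fiberwise_of_maps_to (g := SimpleGraph.Dart.edge)
      (t := G.edgeFinset) (fun d _ => by rw [SimpleGraph.mem_edgeFinset]; exact d.edge_mem)]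
    refine Finset.sum_congr rfl fun e he => ?_
    have hcard : #({d : G.Dart | d.edge = e} : Finset _) = 2 :=
      G.dart_edge_fiber_card e (SimpleGraph.mem_edgeFinset.mp he)
    calc ∑ d ∈ ({d : G.Dart | d.edge = e} : Finset _), Sym2.lift ⟨f, hf⟩ d.edge
        = ∑ d ∈ ({d : G.Dart | d.edge = e} : Finset _), Sym2.lift ⟨f, hf⟩ e := by
          refine Finset.sum_congr rfl fun d hd => ?_
          rw [(Finset.mem_filter.mp hd).2]
    _ = 2 * Sym2.lift ⟨f, hf⟩ e := by rw [Finset.sum_const, hcard]; simp [mul_comm]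
  have stepB : ∀ d : G.Dart, Sym2.lift ⟨f, hf⟩ d.edge = f d.toProd.1 d.toProd.2 := by
    intro d
    rcases d with ⟨⟨a, b⟩, h⟩
    rfl
  have stepA : ∑ d : G.Dart, f d.toProd.1 d.toProd.2
      = ∑ a : V, ∑ b : V, if G.Adj a b then f a b else 0 := by
    rw [← Finset.sum_product', ← Finset.sum_filter]
    refine Finset.sum_bij (fun (d : G.Dart) _ => d.toProd) ?_ ?_ ?_ ?_
    · intro d _
      simp only [Finset.mem_filter, Finset.mem_product, mem_univ, true_and, and_true]
      exact d.adj
    · intro d1 _ d2 _ h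
      exact SimpleGraph.Dart.ext _ _ h
    · intro p hp
      simp only [Finset.mem_filter] at hp
      exact ⟨SimpleGraph.Dart.mk p hp.2, mem_univ _, rfl⟩
    · intro d _
      rfl
  calc 2 * ∑ e ∈ G.edgeFinset, Sym2.lift ⟨f, hf⟩ e
      = ∑ e ∈ G.edgeFinset, 2 * Sym2.lift ⟨f, hf⟩ e := by rw [Finset.mul_sum]
  _ = ∑ d : G.Dart, Sym2.lift ⟨f, hf⟩ d.edge := stepC.symm
  _ = ∑ d : G.Dart, f d.toProd.1 d.toProd.2 := Finset.sum_congr rfl fun d _ => stepB d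
  _ = ∑ a : V, ∑ b : V, if G.Adj a b then f a b else 0 := stepA

lemma resDistS_entries (i j : V) :
    resDistS G i j = Bmat G i i + Bmat G j j - Bmat G i j - Bmat G j i := by
  rw [resDistS, Matrix.mulVec_sub, Matrix.mulVec_single_one, Matrix.mulVec_single_one,
    sub_dotProduct, single_dotProduct, single_dotProduct]
  simp only [Pi.sub_apply, mul_one, one_mul, Matrix.col_apply]
  ring

lemma resDistS_symm (i j : V) : resDistS G i j = resDistS G j i := by
  rw [resDistS_entries, resDistS_entries]; ring

lemma resDistS_symm2 : ∀ a b : V, (fun a b => resDistS G a b) a b = (fun a b => resDistS G a b) b a :=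
  fun a b => resDistS_symm G a b

/-- resistance as a function on edges -/
noncomputable def Wres : Sym2 V → ℝ :=
  Sym2.lift ⟨fun a b => resDistS G a b, resDistS_symm2 G⟩

lemma Wres_mk (a b : V) : Wres G s(a, b) = resDistS G a b := rfl

lemma lap_entry (a b : V) : G.lapMatrix ℝ a b
    = (if a = b then (G.degree a : ℝ) else 0) - (if G.Adj a b then 1 else 0) := by
  simp [SimpleGraph.lapMatrix, SimpleGraph.degMatrix, Matrix.sub_apply, Matrix.diagonal_apply]

lemma foster (hG : G.Connected) :
    ∑ e ∈ G.edgeFinset, Wres G e = (Fintype.card V : ℝ) - 1 := by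
  have hcard : 0 < Fintype.card V := @Fintype.card_pos V _ hG.nonempty
  have hcR : (0 : ℝ) < (Fintype.card V : ℝ) := by exact_mod_cast hcard
  have hT : ∑ a : V, ∑ b : V, G.lapMatrix ℝ a b * Bmat G b a = (Fintype.card V : ℝ) - 1 := by
    have h1 : ∀ a : V, ∑ b, G.lapMatrix ℝ a b * Bmat G b a = (G.lapMatrix ℝ * Bmat G) a a :=
      fun a => (Matrix.mul_apply).symm
    calc ∑ a : V, ∑ b : V, G.lapMatrix ℝ a b * Bmat G b a
        = ∑ a : V, (G.lapMatrix ℝ * Bmat G) a a := Finset.sum_congr rfl fun a _ => h1 a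
    _ = ∑ a : V, (1 - ((Fintype.card V : ℝ))⁻¹) := by
        rw [lap_mul_Bmat G hG]
        refine Finset.sum_congr rfl fun a _ => ?_
        simp [Matrix.sub_apply, Matrix.one_apply_eq, onesM]
    _ = (Fintype.card V : ℝ) - 1 := by
        rw [Finset.sum_const, Finset.card_univ, nsmul_eq_mul]
        field_simp
  have hT2 : ∑ a : V, ∑ b : V, G.lapMatrix ℝ a b * Bmat G b a
      = ∑ a : V, (G.degree a : ℝ) * Bmat G a a
        - ∑ a : V, ∑ b : V, (if G.Adj a b then Bmat G b a else 0) := by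
    rw [← Finset.sum_sub_distrib]
    refine Finset.sum_congr rfl fun a _ => ?_
    have : ∀ b : V, G.lapMatrix ℝ a b * Bmat G b a
        = (if a = b then (G.degree a : ℝ) * Bmat G b a else 0)
          - (if G.Adj a b then Bmat G b a else 0) := by
      intro b
      rw [lap_entry, sub_mul, ite_mul, ite_mul, zero_mul, one_mul]
    rw [Finset.sum_congr rfl fun b _ => this b, Finset.sum_sub_distrib, Finset.sum_ite_eq]
    simp
  have hS1 : ∀ a : V, ∑ b : V, (if G.Adj a b then Bmat G a a else 0)
      = (G.degree a : ℝ) * Bmat G a a := by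
    intro a
    rw [G.degree_eq_sum_if_adj (R := ℝ) a, Finset.sum_mul]
    refine Finset.sum_congr rfl fun b _ => ?_
    split <;> simp
  have hS2 : ∑ a : V, ∑ b : V, (if G.Adj a b then Bmat G b b else 0)
      = ∑ a : V, (G.degree a : ℝ) * Bmat G a a := by
    rw [Finset.sum_comm]
    refine Finset.sum_congr rfl fun b _ => ?_
    calc ∑ a : V, (if G.Adj a b then Bmat G b b else 0)
        = ∑ a : V, (if G.Adj b a then Bmat G b b else 0) := by
          exact Finset.sum_congr rfl fun a _ => if_congr (G.adj_comm a b) rfl rfl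
    _ = (G.degree b : ℝ) * Bmat G b b := hS1 b
  have hS34 : ∑ a : V, ∑ b : V, (if G.Adj a b then Bmat G a b else 0)
      = ∑ a : V, ∑ b : V, (if G.Adj a b then Bmat G b a else 0) := by
    rw [Finset.sum_comm]
    exact Finset.sum_congr rfl fun b _ => Finset.sum_congr rfl fun a _ =>
      if_congr (G.adj_comm a b) rfl rfl
  have hEDS : ∑ a : V, ∑ b : V, (if G.Adj a b then resDistS G a b else 0)
      = 2 * ((Fintype.card V : ℝ) - 1) := by
    have expand : ∀ a b : V, (if G.Adj a b then resDistS G a b else 0)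
        = (if G.Adj a b then Bmat G a a else 0) + (if G.Adj a b then Bmat G b b else 0)
          - (if G.Adj a b then Bmat G a b else 0) - (if G.Adj a b then Bmat G b a else 0) := by
      intro a b
      split
      · rw [resDistS_entries]
      · ring
    have e1 : ∑ a : V, ∑ b : V, (if G.Adj a b then Bmat G a a else 0)
        = ∑ a : V, (G.degree a : ℝ) * Bmat G a a := Finset.sum_congr rfl fun a _ => hS1 a
    simp_rw [expand]
    simp only [Finset.sum_sub_distrib, Finset.sum_add_distrib]
    rw [e1, hS2, hS34]
    linarith [hT, hT2]
  have key := sum_edges_twice G (fun a b => resDistS G a b) (resDistS_symm2 G)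
  rw [hEDS] at key
  have key2 : 2 * ∑ e ∈ G.edgeFinset, Wres G e = 2 * ((Fintype.card V : ℝ) - 1) := key
  linarith

lemma cs_sum_sq {α : Type*} (s : Finset α) (w : α → ℝ) (hw : ∀ a ∈ s, 0 < w a) :
    ((#s : ℝ))^2 ≤ (∑ a ∈ s, 1 / w a) * (∑ a ∈ s, w a) ∧
    (((#s : ℝ))^2 = (∑ a ∈ s, 1 / w a) * (∑ a ∈ s, w a) ↔ ∀ a ∈ s, ∀ b ∈ s, w a = w b) := by
  have h1 : (∑ a ∈ s, 1 / w a) * (∑ a ∈ s, w a) = ∑ a ∈ s, ∑ b ∈ s, w b / w a := by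
    rw [Finset.sum_mul_sum]
    exact Finset.sum_congr rfl fun a _ => Finset.sum_congr rfl fun b _ => by ring
  have h2 : ((#s : ℝ))^2 = ∑ a ∈ s, ∑ b ∈ s, (1:ℝ) := by
    simp [sq, Finset.sum_const, mul_comm]
  have hD : (∑ a ∈ s, 1 / w a) * (∑ a ∈ s, w a) - ((#s : ℝ))^2
      = ∑ a ∈ s, ∑ b ∈ s, (w b / w a - 1) := by
    rw [h1, h2, ← Finset.sum_sub_distrib]
    exact Finset.sum_congr rfl fun a _ => by rw [← Finset.sum_sub_distrib]
  have hswap : ∑ a ∈ s, ∑ b ∈ s, (w b / w a - 1) = ∑ a ∈ s, ∑ b ∈ s, (w a / w b - 1) :=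
    Finset.sum_comm
  have hpt : ∀ a ∈ s, ∀ b ∈ s, (w b / w a - 1) + (w a / w b - 1)
      = (w a - w b)^2 / (w a * w b) := by
    intro a ha b hb
    have hwa := (hw a ha).ne'
    have hwb := (hw b hb).ne'
    field_simp
    ring
  have h4 : 2 * (∑ a ∈ s, ∑ b ∈ s, (w b / w a - 1))
      = ∑ a ∈ s, ∑ b ∈ s, (w a - w b)^2 / (w a * w b) := by
    rw [two_mul]
    nth_rewrite 2 [hswap]
    rw [← Finset.sum_add_distrib]
    refine Finset.sum_congr rfl fun a ha => ?_
    rw [← Finset.sum_add_distrib]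
    exact Finset.sum_congr rfl fun b hb => hpt a ha b hb
  have hnn : ∀ a ∈ s, ∀ b ∈ s, 0 ≤ (w a - w b)^2 / (w a * w b) := by
    intro a ha b hb
    exact div_nonneg (sq_nonneg _) (le_of_lt (mul_pos (hw a ha) (hw b hb)))
  have hDnn : 0 ≤ ∑ a ∈ s, ∑ b ∈ s, (w b / w a - 1) := by
    nlinarith [h4, Finset.sum_nonneg fun a ha =>
      Finset.sum_nonneg fun b hb => hnn a ha b hb]
  constructor
  · nlinarith [hD, hDnn]
  · constructor
    · intro heq
      have hzero : ∑ a ∈ s, ∑ b ∈ s, (w a - w b)^2 / (w a * w b) = 0 := by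
        nlinarith [h4, hD]
      have hinner : ∀ a ∈ s, ∑ b ∈ s, (w a - w b)^2 / (w a * w b) = 0 := by
        intro a ha
        exact (Finset.sum_eq_zero_iff_of_nonneg fun a ha =>
          Finset.sum_nonneg fun b hb => hnn a ha b hb).mp hzero a ha
      intro a ha b hb
      have hz := (Finset.sum_eq_zero_iff_of_nonneg fun b hb => hnn a ha b hb).mp
        (hinner a ha) b hb
      rcases div_eq_zero_iff.mp hz with h | h
      · exact sub_eq_zero.mp ((pow_eq_zero_iff (two_ne_zero)).mp h)
      · exact absurd h (mul_pos (hw a ha) (hw b hb)).ne'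
    · intro hconst
      have hz : ∀ a ∈ s, ∀ b ∈ s, (w b / w a - 1) = 0 := fun a ha b hb => by
        rw [hconst b hb a ha, div_self (hw a ha).ne']
        ring
      have hzz : ∑ a ∈ s, ∑ b ∈ s, (w b / w a - 1) = 0 :=
        Finset.sum_eq_zero fun a ha => Finset.sum_eq_zero fun b hb => hz a ha b hb
      nlinarith [hD, hzz]

lemma Wres_pos (hG : G.Connected) {e : Sym2 V} (he : e ∈ G.edgeFinset) : 0 < Wres G e := by
  induction e using Sym2.ind with
  | _ x y =>
    rw [SimpleGraph.mem_edgeFinset, SimpleGraph.mem_edgeSet] at he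
    rw [Wres_mk]
    exact resDistS_pos G hG x y he.ne

lemma Wres_le_one (hG : G.Connected) {e : Sym2 V} (he : e ∈ G.edgeFinset) : Wres G e ≤ 1 := by
  induction e using Sym2.ind with
  | _ x y =>
    rw [SimpleGraph.mem_edgeFinset, SimpleGraph.mem_edgeSet] at he
    rw [Wres_mk]
    exact resDistS_le_one G hG he

lemma Wres_ge (hG : G.Connected) (hGc : Gᶜ.Connected) (h5 : 5 ≤ Fintype.card V)
    {e : Sym2 V} (he : e ∈ G.edgeFinset) :
    2 / ((Fintype.card V : ℝ) - 1) ≤ Wres G e := by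
  induction e using Sym2.ind with
  | _ x y =>
    rw [SimpleGraph.mem_edgeFinset, SimpleGraph.mem_edgeSet] at he
    rw [Wres_mk]
    exact resDistS_ge G hG hGc h5 he

lemma cyclicity_eq (hG : G.Connected) :
    cyclicity G = (∑ e ∈ G.edgeFinset, 1 / Wres G e) - #G.edgeFinset := by
  have hfun : ∀ (p : ∀ a b : V, (fun i j => 1 / resDist G i j - 1) a b
      = (fun i j => 1 / resDist G i j - 1) b a) (e : Sym2 V),
      Sym2.lift ⟨fun i j => 1 / resDist G i j - 1, p⟩ e = 1 / Wres G e - 1 := by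
    intro p e
    induction e using Sym2.ind with
    | _ x y =>
      rw [Sym2.lift_mk]
      show 1 / resDist G x y - 1 = 1 / Wres G s(x, y) - 1
      rw [Wres_mk, resDist_eq_resDistS G hG]
  have h0 : cyclicity G = ∑ e ∈ G.edgeFinset,
      Sym2.lift ⟨fun i j => 1 / resDist G i j - 1,
        fun i j => by simp only []; rw [resDist_comm G i j]⟩ e := by
    unfold cyclicity
    congr!
  rw [h0, Finset.sum_congr rfl fun e _ => hfun _ e, Finset.sum_sub_distrib,
    Finset.sum_const, nsmul_eq_mul, mul_one]

lemma two_m_add : 2 * (#G.edgeFinset + #Gᶜ.edgeFinset)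
    = Fintype.card V * (Fintype.card V - 1) := by
  rw [Nat.mul_add, ← SimpleGraph.sum_degrees_eq_twice_card_edges,
    ← SimpleGraph.sum_degrees_eq_twice_card_edges, ← Finset.sum_add_distrib]
  have hv : ∀ v : V, G.degree v + Gᶜ.degree v = Fintype.card V - 1 := by
    intro v
    have h1 : Gᶜ.degree v = Fintype.card V - 1 - G.degree v := G.degree_compl v
    have h2 : G.degree v < Fintype.card V := G.degree_lt_card_verts v
    omega
  rw [Finset.sum_congr rfl fun v _ => hv v, Finset.sum_const, Finset.card_univ, smul_eq_mul]

lemma eee_iff (hG : G.Connected) : ElecEdgeEquiv G ↔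
    ∀ e ∈ G.edgeFinset, ∀ e' ∈ G.edgeFinset, Wres G e = Wres G e' := by
  constructor
  · intro h e he e' he'
    induction e using Sym2.ind with
    | _ x y =>
      induction e' using Sym2.ind with
      | _ u v =>
        rw [SimpleGraph.mem_edgeFinset, SimpleGraph.mem_edgeSet] at he he'
        rw [Wres_mk, Wres_mk, ← resDist_eq_resDistS G hG, ← resDist_eq_resDistS G hG]
        exact h x y u v he he'
  · intro h u v x y huv hxy
    have := h s(u, v) (SimpleGraph.mem_edgeFinset.mpr ((G.mem_edgeSet).mpr huv))
      s(x, y) (SimpleGraph.mem_edgeFinset.mpr ((G.mem_edgeSet).mpr hxy))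
    rw [Wres_mk, Wres_mk, ← resDist_eq_resDistS G hG, ← resDist_eq_resDistS G hG] at this
    exact this

end NGaux

theorem stmt18 {V : Type*} [Fintype V] [DecidableEq V] (G : SimpleGraph V) [DecidableRel G.Adj]
    (hG : G.Connected) (hGc : Gᶜ.Connected)
    (n : ℕ) (hn : n = Fintype.card V) (h5 : 5 ≤ n) :
    ((n : ℝ) * ((n : ℝ) - 1) * ((n : ℝ) - 4) / 8 ≤ cyclicity G + cyclicity Gᶜ ∧
      cyclicity G + cyclicity Gᶜ < (n : ℝ) * ((n : ℝ) - 1) * ((n : ℝ) - 4) / 4) ∧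
    (cyclicity G + cyclicity Gᶜ = (n : ℝ) * ((n : ℝ) - 1) * ((n : ℝ) - 4) / 8 ↔
      G.edgeFinset.card = Gᶜ.edgeFinset.card ∧ ElecEdgeEquiv G ∧ ElecEdgeEquiv Gᶜ) := by
  have hGc2 : (Gᶜ)ᶜ.Connected := by rwa [compl_compl]
  have h5V : 5 ≤ Fintype.card V := hn ▸ h5
  have hNcard : (Fintype.card V : ℝ) = (n : ℝ) := by rw [hn]
  have hN5 : (5 : ℝ) ≤ (n : ℝ) := by exact_mod_cast h5
  have hN1 : (0 : ℝ) < (n : ℝ) - 1 := by linarith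
  set N : ℝ := (n : ℝ) with hNdef
  -- abbreviations
  set m : ℝ := (#G.edgeFinset : ℝ) with hm
  set m' : ℝ := (#Gᶜ.edgeFinset : ℝ) with hm'
  set A : ℝ := ∑ e ∈ G.edgeFinset, 1 / Wres G e with hA
  set A' : ℝ := ∑ e ∈ Gᶜ.edgeFinset, 1 / Wres Gᶜ e with hA'
  -- Foster
  have fosterG : ∑ e ∈ G.edgeFinset, Wres G e = N - 1 := by rw [foster G hG, hNcard]
  have fosterG' : ∑ e ∈ Gᶜ.edgeFinset, Wres Gᶜ e = N - 1 := by rw [foster Gᶜ hGc, hNcard]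
  -- cyclicity rewriting
  have cyclG : cyclicity G = A - m := cyclicity_eq G hG
  have cyclG' : cyclicity Gᶜ = A' - m' := cyclicity_eq Gᶜ hGc
  -- positivity
  have posG : ∀ e ∈ G.edgeFinset, 0 < Wres G e := fun e he => Wres_pos G hG he
  have posG' : ∀ e ∈ Gᶜ.edgeFinset, 0 < Wres Gᶜ e := fun e he => Wres_pos Gᶜ hGc he
  -- Cauchy–Schwarz
  obtain ⟨csG1, csG2⟩ := cs_sum_sq G.edgeFinset (Wres G) posG
  obtain ⟨csG1', csG2'⟩ := cs_sum_sq Gᶜ.edgeFinset (Wres Gᶜ) posG'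
  rw [fosterG, ← hA, ← hm] at csG1 csG2
  rw [fosterG', ← hA', ← hm'] at csG1' csG2'
  -- edge count
  have hmm' : 2 * (m + m') = N * (N - 1) := by
    have hnat := two_m_add G
    have h1 : 1 ≤ Fintype.card V := by omega
    have hcast : 2 * ((#G.edgeFinset : ℝ) + (#Gᶜ.edgeFinset : ℝ))
        = (Fintype.card V : ℝ) * ((Fintype.card V : ℝ) - 1) := by
      calc 2 * ((#G.edgeFinset : ℝ) + (#Gᶜ.edgeFinset : ℝ))
          = ((2 * (#G.edgeFinset + #Gᶜ.edgeFinset) : ℕ) : ℝ) := by push_cast; ring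
      _ = ((Fintype.card V * (Fintype.card V - 1) : ℕ) : ℝ) := by rw [hnat]
      _ = (Fintype.card V : ℝ) * ((Fintype.card V : ℝ) - 1) := by
          push_cast [Nat.cast_sub h1]; ring
    rw [hNcard] at hcast
    rw [hm, hm']
    exact hcast
  -- the key algebraic identity
  have key : (A + A' - (m + m') - N * (N - 1) * (N - 4) / 8) * (N - 1)
      = (A * (N - 1) - m ^ 2) + (A' * (N - 1) - m' ^ 2) + (m - m') ^ 2 / 2 := by
    linear_combination ((m + m') / 4 + (N - 1) * (N - 4) / 8) * hmm'
  have E1nn : 0 ≤ A * (N - 1) - m ^ 2 := by nlinarith [csG1]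
  have E2nn : 0 ≤ A' * (N - 1) - m' ^ 2 := by nlinarith [csG1']
  have E3nn : 0 ≤ (m - m') ^ 2 / 2 := by positivity
  have hCC : cyclicity G + cyclicity Gᶜ = A + A' - (m + m') := by
    rw [cyclG, cyclG']; ring
  constructor
  · constructor
    · -- lower bound
      rw [hCC]
      have hprod : 0 ≤ (A + A' - (m + m') - N * (N - 1) * (N - 4) / 8) * (N - 1) := by
        rw [key]; linarith
      have hdiv := div_nonneg hprod (le_of_lt hN1)
      rw [mul_div_cancel_right₀ _ hN1.ne'] at hdiv
      linarith
    · -- upper bound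
      have peG : ∀ e ∈ G.edgeFinset, 1 / Wres G e ≤ (N - 1) / 2 * (1 - Wres G e) + 1 := by
        intro e he
        have h1 := Wres_ge G hG hGc h5V he
        have h2 := Wres_le_one G hG he
        have h3 := posG e he
        rw [hNcard] at h1
        have h4 : 2 ≤ Wres G e * (N - 1) := (div_le_iff₀ hN1).mp h1
        rw [div_le_iff₀ h3]
        nlinarith [h2, h3, h4]
      have peG' : ∀ e ∈ Gᶜ.edgeFinset, 1 / Wres Gᶜ e ≤ (N - 1) / 2 * (1 - Wres Gᶜ e) + 1 := by
        intro e he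
        have h1 := Wres_ge Gᶜ hGc hGc2 h5V he
        have h2 := Wres_le_one Gᶜ hGc he
        have h3 := posG' e he
        rw [hNcard] at h1
        have h4 : 2 ≤ Wres Gᶜ e * (N - 1) := (div_le_iff₀ hN1).mp h1
        rw [div_le_iff₀ h3]
        nlinarith [h2, h3, h4]
      have hAle : A ≤ (N - 1) / 2 * (m - (N - 1)) + m := by
        calc A ≤ ∑ e ∈ G.edgeFinset, ((N - 1) / 2 * (1 - Wres G e) + 1) :=
              Finset.sum_le_sum peG
        _ = (N - 1) / 2 * (m - (N - 1)) + m := by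
            rw [Finset.sum_add_distrib, Finset.sum_const, ← Finset.mul_sum,
              Finset.sum_sub_distrib, Finset.sum_const, fosterG, nsmul_eq_mul]
            rw [← hm]
            ring
      have hAle' : A' ≤ (N - 1) / 2 * (m' - (N - 1)) + m' := by
        calc A' ≤ ∑ e ∈ Gᶜ.edgeFinset, ((N - 1) / 2 * (1 - Wres Gᶜ e) + 1) :=
              Finset.sum_le_sum peG'
        _ = (N - 1) / 2 * (m' - (N - 1)) + m' := by
            rw [Finset.sum_add_distrib, Finset.sum_const, ← Finset.mul_sum,
              Finset.sum_sub_distrib, Finset.sum_const, fosterG', nsmul_eq_mul]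
            rw [← hm']
            ring
      rw [hCC]
      have hS : m + m' = N * (N - 1) / 2 := by linarith
      nlinarith [hAle, hAle', hS, hN5, mul_pos hN1 (show (0:ℝ) < N - 4 by linarith)]
  · -- equality characterisation
    rw [hCC]
    constructor
    · intro heq
      have hdz : A + A' - (m + m') - N * (N - 1) * (N - 4) / 8 = 0 := by rw [heq]; ring
      have hzero : (A * (N - 1) - m ^ 2) + (A' * (N - 1) - m' ^ 2) + (m - m') ^ 2 / 2 = 0 := by
        rw [← key, hdz, zero_mul]
      have hE1 : A * (N - 1) - m ^ 2 = 0 := by linarith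
      have hE2 : A' * (N - 1) - m' ^ 2 = 0 := by linarith
      have hE3 : (m - m') ^ 2 = 0 := by linarith
      have hmr : m = m' := by nlinarith [hE3]
      have hcard : #G.edgeFinset = #Gᶜ.edgeFinset := by
        have : ((#G.edgeFinset : ℝ)) = ((#Gᶜ.edgeFinset : ℝ)) := by rw [← hm, ← hm']; exact hmr
        exact_mod_cast this
      refine ⟨hcard, ?_, ?_⟩
      · exact (eee_iff G hG).mpr (csG2.mp (by linarith))
      · exact (eee_iff Gᶜ hGc).mpr (csG2'.mp (by linarith))
    · rintro ⟨hcard, heeG, heeG'⟩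
      have hmr : m = m' := by rw [hm, hm', hcard]
      have h1 : m ^ 2 = A * (N - 1) := csG2.mpr ((eee_iff G hG).mp heeG)
      have h2 : m' ^ 2 = A' * (N - 1) := csG2'.mpr ((eee_iff Gᶜ hGc).mp heeG')
      have hz : (A + A' - (m + m') - N * (N - 1) * (N - 4) / 8) * (N - 1) = 0 := by
        rw [key, ← h1, ← h2, hmr]; ring
      rcases mul_eq_zero.mp hz with h | h
      · linarith
      · exact absurd h hN1.ne'
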